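/- arXiv:1401.2783 — 2 statements merged into one kernel-verified Lean document; each statement's English description precedes it below -/
import Mathlib

section
/- If F and G are U-statistics of orders k and l respectively (driven by symmetric functions f and g), then the (k+l)-th iterated difference D^{k+l}_{y₁,…,y_{k+l}}(F·G) is a deterministic function of y₁,…,y_{k+l} (does not depend on the configuration), and consequently D^{n}(F·G) = 0 for all n > k + l. -/
/-- The difference operator `D_y F(x) = F(x ∪ {y}) − F(x)`. -/
def diffF {B : Type*} [DecidableEq B] (y : B) (F : Finset B → ℝ) : Finset B → ℝ :=
  fun x => F (insert y x) - F x

/-- The iterated difference operator. -/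
def diffIterF {B : Type*} [DecidableEq B] : List B → (Finset B → ℝ) → Finset B → ℝ
  | [], F => F
  | y :: ys, F => diffF y (diffIterF ys F)

/-- The set `x^k_≠` of `k`-tuples of pairwise distinct points of a configuration `x`. -/
def distinctTuples {B : Type*} [DecidableEq B] (k : ℕ) (x : Finset B) :
    Finset (Fin k → B) :=
  (Fintype.piFinset fun _ : Fin k => x).filter Function.Injective

/-- The `U`-statistic of order `k` driven by `f`. -/
def Ustat {B : Type*} [DecidableEq B] (k : ℕ) (f : (Fin k → B) → ℝ) (x : Finset B) : ℝ :=
  ∑ t ∈ distinctTuples k x, f t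

section Aux
variable {B : Type*} [DecidableEq B]

def rngT {k : ℕ} (t : Fin k → B) : Finset B := Finset.image t Finset.univ

lemma mem_distinctTuplesAux {k : ℕ} {t : Fin k → B} {x : Finset B} :
    t ∈ distinctTuples k x ↔ (∀ i, t i ∈ x) ∧ Function.Injective t := by
  simp [distinctTuples, Fintype.mem_piFinset]

lemma rngT_card_le {k : ℕ} (t : Fin k → B) : (rngT t).card ≤ k := by
  simpa [rngT] using Finset.card_image_le (s := (Finset.univ : Finset (Fin k))) (f := t)

lemma mem_rngT {k : ℕ} {t : Fin k → B} {a : B} : a ∈ rngT t ↔ ∃ i, t i = a := by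
  simp [rngT]

variable (k l : ℕ) (f : (Fin k → B) → ℝ) (g : (Fin l → B) → ℝ)

/-- Sum of `f s * g t` over pairs of distinct tuples of `x` whose combined range covers `Y`. -/
def Spair (Y x : Finset B) : ℝ :=
  ∑ p ∈ (distinctTuples k x ×ˢ distinctTuples l x).filter
      (fun p => Y ⊆ rngT p.1 ∪ rngT p.2), f p.1 * g p.2

lemma Spair_step {y : B} {Y z : Finset B} (hy : y ∉ z) :
    Spair k l f g Y (insert y z) - Spair k l f g Y z
      = Spair k l f g (insert y Y) (insert y z) := by
  classical
  unfold Spair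
  rw [← Finset.sum_filter_add_sum_filter_not
      ((distinctTuples k (insert y z) ×ˢ distinctTuples l (insert y z)).filter
        (fun p => Y ⊆ rngT p.1 ∪ rngT p.2)) (fun p => y ∈ rngT p.1 ∪ rngT p.2)]
  have h1 : ((distinctTuples k (insert y z) ×ˢ distinctTuples l (insert y z)).filter
        (fun p => Y ⊆ rngT p.1 ∪ rngT p.2)).filter (fun p => y ∈ rngT p.1 ∪ rngT p.2)
      = (distinctTuples k (insert y z) ×ˢ distinctTuples l (insert y z)).filter
        (fun p => insert y Y ⊆ rngT p.1 ∪ rngT p.2) := by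
    rw [Finset.filter_filter]
    apply Finset.filter_congr
    intro p _
    simp only [Finset.insert_subset_iff]
    tauto
  have h2 : ((distinctTuples k (insert y z) ×ˢ distinctTuples l (insert y z)).filter
        (fun p => Y ⊆ rngT p.1 ∪ rngT p.2)).filter (fun p => ¬ y ∈ rngT p.1 ∪ rngT p.2)
      = (distinctTuples k z ×ˢ distinctTuples l z).filter
        (fun p => Y ⊆ rngT p.1 ∪ rngT p.2) := by
    ext p
    simp only [Finset.mem_filter, Finset.mem_product, mem_distinctTuplesAux,
      Finset.mem_union, mem_rngT, not_or, not_exists]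
    constructor
    · rintro ⟨⟨⟨⟨h1v, h1i⟩, ⟨h2v, h2i⟩⟩, hsub⟩, hy1, hy2⟩
      refine ⟨⟨⟨fun i => ?_, h1i⟩, ⟨fun i => ?_, h2i⟩⟩, hsub⟩
      · rcases Finset.mem_insert.1 (h1v i) with h | h
        · exact absurd h (hy1 i)
        · exact h
      · rcases Finset.mem_insert.1 (h2v i) with h | h
        · exact absurd h (hy2 i)
        · exact h
    · rintro ⟨⟨⟨h1v, h1i⟩, ⟨h2v, h2i⟩⟩, hsub⟩
      refine ⟨⟨⟨⟨fun i => Finset.mem_insert_of_mem (h1v i), h1i⟩,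
        ⟨fun i => Finset.mem_insert_of_mem (h2v i), h2i⟩⟩, hsub⟩,
        fun i h => hy (h ▸ h1v i), fun i h => hy (h ▸ h2v i)⟩
  rw [h1, h2]
  ring

lemma diffIter_eq_Spair : ∀ (ys : List B) (x : Finset B), ys.Nodup →
    (∀ a ∈ ys, a ∉ x) →
    diffIterF ys (fun z => Ustat k f z * Ustat l g z) x
      = Spair k l f g ys.toFinset (x ∪ ys.toFinset) := by
  intro ys
  induction ys with
  | nil =>
    intro x _ _
    simp only [diffIterF, List.toFinset_nil, Finset.union_empty]
    unfold Spair Ustat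
    rw [Finset.filter_true_of_mem (fun p _ => Finset.empty_subset _), Finset.sum_mul_sum,
      Finset.sum_product]
  | cons y ys ih =>
    intro x hnd hnotin
    have hynys : y ∉ ys := (List.nodup_cons.1 hnd).1
    have hndys : ys.Nodup := (List.nodup_cons.1 hnd).2
    have hstep : diffIterF (y :: ys) (fun z => Ustat k f z * Ustat l g z) x
        = diffIterF ys (fun z => Ustat k f z * Ustat l g z) (insert y x)
          - diffIterF ys (fun z => Ustat k f z * Ustat l g z) x := rfl
    rw [hstep, ih (insert y x) hndys
        (fun a ha => by
          simp only [Finset.mem_insert, not_or]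
          exact ⟨fun h => hynys (h ▸ ha), hnotin a (List.mem_cons_of_mem _ ha)⟩),
      ih x hndys (fun a ha => hnotin a (List.mem_cons_of_mem _ ha))]
    have hz : y ∉ x ∪ ys.toFinset := by
      simp only [Finset.mem_union, List.mem_toFinset, not_or]
      exact ⟨hnotin y (List.mem_cons_self), hynys⟩
    have e1 : insert y x ∪ ys.toFinset = insert y (x ∪ ys.toFinset) := by
      rw [Finset.insert_union]
    have e2 : x ∪ (y :: ys).toFinset = insert y (x ∪ ys.toFinset) := by
      simp [List.toFinset_cons, Finset.union_insert]
    rw [e1, e2, Spair_step k l f g hz, List.toFinset_cons]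

end Aux

/-- For `U`-statistics `F, G` of orders `k, l`, the `(k+l)`-th iterated difference of the
product `F·G` does not depend on the configuration (it is a deterministic function of the
points `y₁,…,y_{k+l}`), and all higher iterated differences vanish. -/
theorem diffIter_prod_Ustat {B : Type*} [DecidableEq B] (k l : ℕ)
    (f : (Fin k → B) → ℝ) (hfsym : ∀ (σ : Equiv.Perm (Fin k)) (t : Fin k → B), f (t ∘ σ) = f t)
    (g : (Fin l → B) → ℝ) (hgsym : ∀ (σ : Equiv.Perm (Fin l)) (t : Fin l → B), g (t ∘ σ) = g t) :
    (∀ y : Fin (k + l) → B, Function.Injective y →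
      ∃ c : ℝ, ∀ x : Finset B, (∀ i, y i ∉ x) →
        diffIterF (List.ofFn y) (fun z => Ustat k f z * Ustat l g z) x = c) ∧
    (∀ n : ℕ, k + l < n → ∀ y : Fin n → B, Function.Injective y →
      ∀ x : Finset B, (∀ i, y i ∉ x) →
        diffIterF (List.ofFn y) (fun z => Ustat k f z * Ustat l g z) x = 0) := by
  classical
  have Ycard : ∀ (n : ℕ) (y : Fin n → B), Function.Injective y →
      ((List.ofFn y).toFinset).card = n := by
    intro n y hy
    rw [List.toFinset_card_of_nodup (List.nodup_ofFn.2 hy)]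
    simp
  have rngcard : ∀ (p : (Fin k → B) × (Fin l → B)),
      (rngT p.1 ∪ rngT p.2).card ≤ k + l := fun p =>
    le_trans (Finset.card_union_le _ _) (Nat.add_le_add (rngT_card_le _) (rngT_card_le _))
  constructor
  · intro y hy
    set Y := (List.ofFn y).toFinset with hYdef
    refine ⟨Spair k l f g Y Y, ?_⟩
    intro x hx
    rw [diffIter_eq_Spair k l f g (List.ofFn y) x (List.nodup_ofFn.2 hy)
      (fun a ha => by obtain ⟨i, hi⟩ := List.mem_ofFn.1 ha; exact hi ▸ hx i)]
    unfold Spair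
    apply Finset.sum_congr _ (fun _ _ => rfl)
    ext p
    simp only [Finset.mem_filter, Finset.mem_product, mem_distinctTuplesAux]
    constructor
    · rintro ⟨⟨⟨h1v, h1i⟩, ⟨h2v, h2i⟩⟩, hsub⟩
      have hcard : (rngT p.1 ∪ rngT p.2).card ≤ Y.card := by
        rw [hYdef, Ycard _ y hy]; exact rngcard p
      have hEq : Y = rngT p.1 ∪ rngT p.2 :=
        Finset.eq_of_subset_of_card_le hsub hcard
      refine ⟨⟨⟨fun i => ?_, h1i⟩, ⟨fun i => ?_, h2i⟩⟩, hsub⟩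
      · rw [hEq]; exact Finset.mem_union_left _ (mem_rngT.2 ⟨i, rfl⟩)
      · rw [hEq]; exact Finset.mem_union_right _ (mem_rngT.2 ⟨i, rfl⟩)
    · rintro ⟨⟨⟨h1v, h1i⟩, ⟨h2v, h2i⟩⟩, hsub⟩
      exact ⟨⟨⟨fun i => Finset.mem_union_right _ (h1v i), h1i⟩,
        ⟨fun i => Finset.mem_union_right _ (h2v i), h2i⟩⟩, hsub⟩
  · intro n hn y hy x hx
    rw [diffIter_eq_Spair k l f g (List.ofFn y) x (List.nodup_ofFn.2 hy)
      (fun a ha => by obtain ⟨i, hi⟩ := List.mem_ofFn.1 ha; exact hi ▸ hx i)]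
    unfold Spair
    apply Finset.sum_eq_zero
    intro p hp
    exfalso
    have hsub := (Finset.mem_filter.1 hp).2
    have hle := Finset.card_le_card hsub
    rw [Ycard n y hy] at hle
    exact absurd (le_trans hle (rngcard p)) (Nat.not_le.2 hn)
end

section
/- Let F₁ and F₂ be U-statistics of orders k₁ ≥ k₂ driven by symmetric functions f₁, f₂ respectively. Then the pointwise product satisfies F₁(μ)F₂(μ) = ∑_{j=0}^{k₂} C(k₂,j) · k₁!/(k₁−k₂+j)! · ∑_{(x₁,…,x_{k₁+j}) ∈ μ^{k₁+j}_≠} f₂(x₁,…,x_{k₂}) f₁(x₁,…,x_{k₂−j}, x_{k₂+1},…,x_{k₁+j}) for every finite point configuration μ. -/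
open Finset

namespace UstatAux

variable {B : Type*} [DecidableEq B]

lemma mem_distinctTuples {k : ℕ} {x : Finset B} {t : Fin k → B} :
    t ∈ distinctTuples k x ↔ (∀ i, t i ∈ x) ∧ Function.Injective t := by
  simp [distinctTuples, Fintype.mem_piFinset]

lemma card_distinctTuples (k : ℕ) (x : Finset B) :
    (distinctTuples k x).card = x.card.descFactorial k := by
  have h1 : Fintype.card (Fin k ↪ {a // a ∈ x}) = x.card.descFactorial k := by
    rw [Fintype.card_embedding_eq, Fintype.card_fin, Fintype.card_coe]
  rw [← h1, ← Finset.card_univ (α := Fin k ↪ {a // a ∈ x})]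
  symm
  refine Finset.card_bij' (fun (e : Fin k ↪ {a // a ∈ x}) _ => fun i => (e i : B))
    (fun t ht => ⟨fun i => ⟨t i, (mem_distinctTuples.mp ht).1 i⟩, fun a b hab => by
      exact (mem_distinctTuples.mp ht).2 congr(($hab : B))⟩) ?_ ?_ ?_ ?_
  · intro e _
    exact mem_distinctTuples.mpr ⟨fun i => (e i).2, fun a b hab => e.injective (Subtype.ext hab)⟩
  · intro t ht; exact mem_univ _
  · intro e _; rfl
  · intro t ht; rfl

def iota (k₁ k₂ j : ℕ) : Fin k₁ → Fin (k₁ + j) := fun i =>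
  if _ : (i : ℕ) < k₂ - j then ⟨i, by omega⟩ else ⟨(i : ℕ) + j, by have := i.isLt; omega⟩

lemma exists_comp_perm_eq {n : ℕ} {f g : Fin n → B} (hf : Function.Injective f)
    (hg : Function.Injective g) (h : Finset.image f univ = Finset.image g univ) :
    ∃ σ : Equiv.Perm (Fin n), f ∘ σ = g := by
  have hr : Set.range f = Set.range g := by
    have := congrArg (fun s : Finset B => (s : Set B)) h
    simpa [Finset.coe_image, Set.image_univ] using this
  refine ⟨(Equiv.ofInjective g hg).trans ((Equiv.setCongr hr.symm).trans
    (Equiv.ofInjective f hf).symm), ?_⟩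
  funext i
  simp [Equiv.apply_ofInjective_symm hf]

lemma comp_perm_image {n : ℕ} (f : Fin n → B) (σ : Equiv.Perm (Fin n)) :
    Finset.image (f ∘ σ) univ = Finset.image f univ := by
  rw [← Finset.image_image, Finset.image_univ_equiv]

lemma image_iota_inter (k₁ k₂ j : ℕ) (hk : k₂ ≤ k₁) (hj : j ≤ k₂) (hc : k₂ ≤ k₁ + j)
    (hc' : k₂ - j ≤ k₁ + j) :
    Finset.image (iota k₁ k₂ j) univ ∩ Finset.image (Fin.castLE hc) univ
      = Finset.image (Fin.castLE hc') univ := by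
  ext p
  simp only [Finset.mem_inter, Finset.mem_image, mem_univ, true_and]
  constructor
  · rintro ⟨⟨i, rfl⟩, m, hm⟩
    have h2 : ((Fin.castLE hc m : Fin (k₁ + j)) : ℕ) < k₂ := m.isLt
    rw [hm] at h2
    have h1 : (iota k₁ k₂ j i : ℕ) < k₂ - j := by
      unfold iota at h2 ⊢; split_ifs at h2 ⊢ with h <;> simp only [Fin.val_mk] at h2 ⊢ <;> omega
    exact ⟨⟨iota k₁ k₂ j i, h1⟩, Fin.ext rfl⟩
  · rintro ⟨i, rfl⟩
    have hi : (i : ℕ) < k₂ - j := i.isLt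
    refine ⟨⟨⟨i, by omega⟩, ?_⟩, ⟨⟨i, by omega⟩, Fin.ext rfl⟩⟩
    unfold iota
    rw [dif_pos (by simpa using hi)]
    exact Fin.ext rfl

lemma fiber_card (k₁ k₂ j : ℕ) (hk : k₂ ≤ k₁) (hj : j ≤ k₂) (hc : k₂ ≤ k₁ + j)
    (μ : Finset B) (s : Fin k₁ → B) (u : Fin k₂ → B)
    (hs : s ∈ distinctTuples k₁ μ) (hu : u ∈ distinctTuples k₂ μ)
    (hovl : (Finset.image s univ ∩ Finset.image u univ).card = k₂ - j) :
    (((distinctTuples (k₁ + j) μ) ×ˢ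
        (univ : Finset (Equiv.Perm (Fin k₁) × Equiv.Perm (Fin k₂)))).filter
      (fun x => x.1 ∘ iota k₁ k₂ j ∘ x.2.1 = s ∧ x.1 ∘ Fin.castLE hc ∘ x.2.2 = u)).card
    = (k₂ - j).factorial * (j.factorial * (k₁ - k₂ + j).factorial) := by
  classical
  obtain ⟨hsμ, hsinj⟩ := mem_distinctTuples.mp hs
  obtain ⟨huμ, huinj⟩ := mem_distinctTuples.mp hu
  set S := Finset.image s univ with hSdef
  set U := Finset.image u univ with hUdef
  have cS : S.card = k₁ := by
    rw [hSdef, Finset.card_image_of_injective _ hsinj, card_univ, Fintype.card_fin]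
  have cU : U.card = k₂ := by
    rw [hUdef, Finset.card_image_of_injective _ huinj, card_univ, Fintype.card_fin]
  set b₁ : Fin (k₂ - j) → Fin (k₁ + j) := fun i => ⟨i, by have := i.isLt; omega⟩ with hb₁
  set b₂ : Fin j → Fin (k₁ + j) := fun i => ⟨k₂ - j + i, by have := i.isLt; omega⟩ with hb₂
  set b₃ : Fin (k₁ - k₂ + j) → Fin (k₁ + j) := fun i => ⟨k₂ + i, by have := i.isLt; omega⟩
    with hb₃
  have key : (((distinctTuples (k₁ + j) μ) ×ˢ
        (univ : Finset (Equiv.Perm (Fin k₁) × Equiv.Perm (Fin k₂)))).filter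
      (fun x => x.1 ∘ iota k₁ k₂ j ∘ x.2.1 = s ∧ x.1 ∘ Fin.castLE hc ∘ x.2.2 = u)).card
      = ((distinctTuples (k₂ - j) (S ∩ U)) ×ˢ ((distinctTuples j (U \ S)) ×ˢ
          (distinctTuples (k₁ - k₂ + j) (S \ U)))).card := by
    refine Finset.card_bij (fun x _ => (x.1 ∘ b₁, x.1 ∘ b₂, x.1 ∘ b₃)) ?_ ?_ ?_
    · -- maps to
      rintro ⟨t, σ₁, σ₂⟩ hx
      simp only [Finset.mem_filter, Finset.mem_product] at hx
      obtain ⟨⟨ht, -⟩, h1, h2⟩ := hx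
      obtain ⟨htμ, htinj⟩ := mem_distinctTuples.mp ht
      have hS : Finset.image (t ∘ iota k₁ k₂ j) univ = S := by
        have e := comp_perm_image (t ∘ iota k₁ k₂ j) σ₁
        rw [Function.comp_assoc, h1] at e
        exact e.symm.trans hSdef.symm
      have hU : Finset.image (t ∘ Fin.castLE hc) univ = U := by
        have e := comp_perm_image (t ∘ Fin.castLE hc) σ₂
        rw [Function.comp_assoc, h2] at e
        exact e.symm.trans hUdef.symm
      have memS : ∀ p : Fin (k₁ + j), ((p : ℕ) < k₂ - j ∨ k₂ ≤ (p : ℕ)) → t p ∈ S := by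
        intro p hp
        rw [← hS]
        rcases hp with hp | hp
        · have : iota k₁ k₂ j ⟨p, by omega⟩ = p := by
            unfold iota; rw [dif_pos (by simpa using hp)]
          rw [← this]; exact Finset.mem_image_of_mem _ (mem_univ _)
        · have : iota k₁ k₂ j ⟨(p : ℕ) - j, by have := p.isLt; omega⟩ = p := by
            unfold iota
            rw [dif_neg (by simp only [Fin.val_mk]; omega)]
            exact Fin.ext (by simp only [Fin.val_mk]; omega)
          rw [← this]; exact Finset.mem_image_of_mem _ (mem_univ _)
      have memU : ∀ p : Fin (k₁ + j), (p : ℕ) < k₂ → t p ∈ U := by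
        intro p hp
        rw [← hU]
        have : t (Fin.castLE hc ⟨p, hp⟩) = t p := rfl
        rw [← this]; exact Finset.mem_image_of_mem _ (mem_univ _)
      have nmemS : ∀ p : Fin (k₁ + j), k₂ - j ≤ (p : ℕ) → (p : ℕ) < k₂ → t p ∉ S := by
        intro p hp1 hp2 hmem
        rw [← hS, Finset.mem_image] at hmem
        obtain ⟨m, -, hm⟩ := hmem
        have := htinj hm
        unfold iota at this
        split_ifs at this <;> rw [← this] at hp1 hp2 <;>
          simp only [Fin.val_mk] at hp1 hp2 <;> omega
      have nmemU : ∀ p : Fin (k₁ + j), k₂ ≤ (p : ℕ) → t p ∉ U := by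
        intro p hp hmem
        rw [← hU, Finset.mem_image] at hmem
        obtain ⟨m, -, hm⟩ := hmem
        have h' := htinj hm
        have : (m : ℕ) = (p : ℕ) := congrArg Fin.val h'
        have := m.isLt; omega
      simp only [Finset.mem_product]
      refine ⟨?_, ?_, ?_⟩
      · refine mem_distinctTuples.mpr ⟨fun i => ?_, fun a b hab => ?_⟩
        · have := i.isLt
          exact Finset.mem_inter.mpr ⟨memS _ (Or.inl (by simp only [hb₁, Fin.val_mk]; omega)),
            memU _ (by simp only [hb₁, Fin.val_mk]; omega)⟩
        · have h' := htinj hab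
          rw [hb₁] at h'
          exact Fin.ext (by simpa using congrArg Fin.val h')
      · refine mem_distinctTuples.mpr ⟨fun i => ?_, fun a b hab => ?_⟩
        · have := i.isLt
          refine Finset.mem_sdiff.mpr ⟨memU _ (by simp only [hb₂, Fin.val_mk]; omega),
            nmemS _ (by simp only [hb₂, Fin.val_mk]; omega)
              (by simp only [hb₂, Fin.val_mk]; omega)⟩
        · have h' := htinj hab
          rw [hb₂] at h'
          exact Fin.ext (by have := congrArg Fin.val h'; simp only [Fin.val_mk] at this; omega)
      · refine mem_distinctTuples.mpr ⟨fun i => ?_, fun a b hab => ?_⟩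
        · have := i.isLt
          refine Finset.mem_sdiff.mpr ⟨memS _ (Or.inr (by simp only [hb₃, Fin.val_mk]; omega)),
            nmemU _ (by simp only [hb₃, Fin.val_mk]; omega)⟩
        · have h' := htinj hab
          rw [hb₃] at h'
          exact Fin.ext (by have := congrArg Fin.val h'; simp only [Fin.val_mk] at this; omega)
    · -- injective
      rintro ⟨t, σ₁, σ₂⟩ hx ⟨t', σ₁', σ₂'⟩ hy hxy
      simp only [Finset.mem_filter, Finset.mem_product] at hx hy
      obtain ⟨⟨ht, -⟩, h1, h2⟩ := hx
      obtain ⟨⟨ht', -⟩, h1', h2'⟩ := hy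
      obtain ⟨htμ, htinj⟩ := mem_distinctTuples.mp ht
      simp only [Prod.mk.injEq] at hxy
      obtain ⟨e1, e2, e3⟩ := hxy
      have htt : t = t' := by
        funext p
        rcases lt_or_ge (p : ℕ) (k₂ - j) with hp | hp
        · have : b₁ ⟨p, hp⟩ = p := Fin.ext rfl
          rw [← this]
          exact congrFun e1 _
        rcases lt_or_ge (p : ℕ) k₂ with hp2 | hp2
        · have : b₂ ⟨(p : ℕ) - (k₂ - j), by omega⟩ = p :=
            Fin.ext (by simp only [hb₂, Fin.val_mk]; omega)
          rw [← this]
          exact congrFun e2 _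
        · have : b₃ ⟨(p : ℕ) - k₂, by have := p.isLt; omega⟩ = p :=
            Fin.ext (by simp only [hb₃, Fin.val_mk]; omega)
          rw [← this]
          exact congrFun e3 _
      subst htt
      have hι : Function.Injective (t ∘ iota k₁ k₂ j) := by
        intro a b hab
        have h' := htinj hab
        unfold iota at h'
        split_ifs at h' <;> rw [Fin.mk.injEq] at h' <;> exact Fin.ext (by omega)
      have hcinj : Function.Injective (t ∘ Fin.castLE hc) := by
        intro a b hab
        exact Fin.ext (by simpa using congrArg Fin.val (htinj hab))
      have hσ₁ : σ₁ = σ₁' := by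
        ext i
        have h' : (t ∘ iota k₁ k₂ j) (σ₁ i) = (t ∘ iota k₁ k₂ j) (σ₁' i) := by
          have a1 := congrFun h1 i
          have a2 := congrFun h1' i
          simp only [Function.comp_apply] at a1 a2 ⊢
          rw [a1, a2]
        exact congrArg Fin.val (hι h')
      have hσ₂ : σ₂ = σ₂' := by
        ext i
        have h' : (t ∘ Fin.castLE hc) (σ₂ i) = (t ∘ Fin.castLE hc) (σ₂' i) := by
          have a1 := congrFun h2 i
          have a2 := congrFun h2' i
          simp only [Function.comp_apply] at a1 a2 ⊢
          rw [a1, a2]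
        exact congrArg Fin.val (hcinj h')
      rw [hσ₁, hσ₂]
    · -- surjective
      rintro ⟨v₁, v₂, v₃⟩ hv
      simp only [Finset.mem_product] at hv
      obtain ⟨hv₁, hv₂, hv₃⟩ := hv
      obtain ⟨hv₁m, hv₁i⟩ := mem_distinctTuples.mp hv₁
      obtain ⟨hv₂m, hv₂i⟩ := mem_distinctTuples.mp hv₂
      obtain ⟨hv₃m, hv₃i⟩ := mem_distinctTuples.mp hv₃
      set t : Fin (k₁ + j) → B := fun p =>
        if h : (p : ℕ) < k₂ - j then v₁ ⟨p, h⟩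
        else if h2 : (p : ℕ) < k₂ then v₂ ⟨(p : ℕ) - (k₂ - j), by omega⟩
        else v₃ ⟨(p : ℕ) - k₂, by have := p.isLt; omega⟩ with htdef
      have tb₁ : t ∘ b₁ = v₁ := by
        funext i
        have := i.isLt
        simp only [htdef, Function.comp_apply, hb₁]
        rw [dif_pos (by omega)]
      have tb₂ : t ∘ b₂ = v₂ := by
        funext i
        have := i.isLt
        simp only [htdef, Function.comp_apply, hb₂]
        rw [dif_neg (by omega), dif_pos (by omega)]
        congr 1
        exact Fin.ext (by simp only [Fin.val_mk]; omega)
      have tb₃ : t ∘ b₃ = v₃ := by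
        funext i
        have := i.isLt
        simp only [htdef, Function.comp_apply, hb₃]
        rw [dif_neg (by omega), dif_neg (by omega)]
        congr 1
        exact Fin.ext (by simp only [Fin.val_mk]; omega)
      have tval : ∀ p : Fin (k₁ + j),
          ((p : ℕ) < k₂ - j → t p ∈ S ∩ U) ∧
          (k₂ - j ≤ (p : ℕ) → (p : ℕ) < k₂ → t p ∈ U \ S) ∧
          (k₂ ≤ (p : ℕ) → t p ∈ S \ U) := by
        intro p
        refine ⟨fun h => ?_, fun h1 h2 => ?_, fun h => ?_⟩
        · simp only [htdef]; rw [dif_pos h]; exact hv₁m _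
        · simp only [htdef]; rw [dif_neg (by omega), dif_pos h2]; exact hv₂m _
        · simp only [htdef]; rw [dif_neg (by omega), dif_neg (by omega)]; exact hv₃m _
      have htinj : Function.Injective t := by
        intro p q hpq
        rcases lt_or_ge (p : ℕ) (k₂ - j) with h1 | h1 <;>
          rcases lt_or_ge (q : ℕ) (k₂ - j) with h1' | h1'
        · simp only [htdef, dif_pos h1, dif_pos h1'] at hpq
          exact Fin.ext (by simpa using congrArg Fin.val (hv₁i hpq))
        · exfalso
          have m1 := (tval p).1 h1
          rcases lt_or_ge (q : ℕ) k₂ with h2 | h2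
          · have m2 := (tval q).2.1 h1' h2
            rw [hpq] at m1
            exact (Finset.mem_sdiff.mp m2).2 (Finset.mem_inter.mp m1).1
          · have m2 := (tval q).2.2 h2
            rw [hpq] at m1
            exact (Finset.mem_sdiff.mp m2).2 (Finset.mem_inter.mp m1).2
        · exfalso
          have m1 := (tval q).1 h1'
          rcases lt_or_ge (p : ℕ) k₂ with h2 | h2
          · have m2 := (tval p).2.1 h1 h2
            rw [← hpq] at m1
            exact (Finset.mem_sdiff.mp m2).2 (Finset.mem_inter.mp m1).1
          · have m2 := (tval p).2.2 h2
            rw [← hpq] at m1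
            exact (Finset.mem_sdiff.mp m2).2 (Finset.mem_inter.mp m1).2
        · rcases lt_or_ge (p : ℕ) k₂ with h2 | h2 <;> rcases lt_or_ge (q : ℕ) k₂ with h2' | h2'
          · simp only [htdef, dif_neg (by omega : ¬ (p:ℕ) < k₂ - j), dif_pos h2,
              dif_neg (by omega : ¬ (q:ℕ) < k₂ - j), dif_pos h2'] at hpq
            have h' := congrArg Fin.val (hv₂i hpq)
            simp only [Fin.val_mk] at h'
            exact Fin.ext (by omega)
          · exfalso
            have m1 := (tval p).2.1 h1 h2
            have m2 := (tval q).2.2 h2'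
            rw [hpq] at m1
            exact (Finset.mem_sdiff.mp m2).2 (Finset.mem_sdiff.mp m1).1
          · exfalso
            have m1 := (tval q).2.1 h1' h2'
            have m2 := (tval p).2.2 h2
            rw [← hpq] at m1
            exact (Finset.mem_sdiff.mp m2).2 (Finset.mem_sdiff.mp m1).1
          · simp only [htdef, dif_neg (by omega : ¬ (p:ℕ) < k₂ - j),
              dif_neg (by omega : ¬ (p:ℕ) < k₂),
              dif_neg (by omega : ¬ (q:ℕ) < k₂ - j), dif_neg (by omega : ¬ (q:ℕ) < k₂)] at hpq
            have h' := congrArg Fin.val (hv₃i hpq)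
            simp only [Fin.val_mk] at h'
            exact Fin.ext (by omega)
      have ht : t ∈ distinctTuples (k₁ + j) μ := by
        refine mem_distinctTuples.mpr ⟨fun p => ?_, htinj⟩
        have hSμ : S ⊆ μ := by
          rw [hSdef]
          exact Finset.image_subset_iff.mpr fun i _ => hsμ i
        have hUμ : U ⊆ μ := by
          rw [hUdef]
          exact Finset.image_subset_iff.mpr fun i _ => huμ i
        rcases lt_or_ge (p : ℕ) (k₂ - j) with h | h
        · exact hSμ (Finset.mem_inter.mp ((tval p).1 h)).1
        rcases lt_or_ge (p : ℕ) k₂ with h2 | h2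
        · exact hUμ (Finset.mem_sdiff.mp ((tval p).2.1 h h2)).1
        · exact hSμ (Finset.mem_sdiff.mp ((tval p).2.2 h2)).1
      have hιinj : Function.Injective (t ∘ iota k₁ k₂ j) := by
        intro a b hab
        have h' := htinj hab
        unfold iota at h'
        split_ifs at h' <;> rw [Fin.mk.injEq] at h' <;> exact Fin.ext (by omega)
      have hcinj : Function.Injective (t ∘ Fin.castLE hc) := by
        intro a b hab
        exact Fin.ext (by simpa using congrArg Fin.val (htinj hab))
      have hSim : Finset.image (t ∘ iota k₁ k₂ j) univ = S := by
        apply Finset.eq_of_subset_of_card_le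
        · intro y hy
          rw [Finset.mem_image] at hy
          obtain ⟨m, -, rfl⟩ := hy
          simp only [Function.comp_apply]
          unfold iota
          split_ifs with h
          · exact (Finset.mem_inter.mp ((tval _).1 (by simpa using h))).1
          · have := m.isLt
            exact (Finset.mem_sdiff.mp ((tval _).2.2 (by simp only [Fin.val_mk]; omega))).1
        · have hcard : (Finset.image (t ∘ iota k₁ k₂ j) univ).card = k₁ := by
            rw [Finset.card_image_of_injective _ hιinj, card_univ, Fintype.card_fin]
          omega
      have hUim : Finset.image (t ∘ Fin.castLE hc) univ = U := by
        apply Finset.eq_of_subset_of_card_le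
        · intro y hy
          rw [Finset.mem_image] at hy
          obtain ⟨m, -, rfl⟩ := hy
          simp only [Function.comp_apply]
          have hm := m.isLt
          rcases lt_or_ge (m : ℕ) (k₂ - j) with h | h
          · exact (Finset.mem_inter.mp ((tval _).1 (by simpa using h))).2
          · exact (Finset.mem_sdiff.mp ((tval _).2.1 (by simpa using h) (by simpa using hm))).1
        · have hcard : (Finset.image (t ∘ Fin.castLE hc) univ).card = k₂ := by
            rw [Finset.card_image_of_injective _ hcinj, card_univ, Fintype.card_fin]
          omega
      obtain ⟨σ₁, hσ₁⟩ := exists_comp_perm_eq hιinj hsinj (hSim.trans hSdef)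
      obtain ⟨σ₂, hσ₂⟩ := exists_comp_perm_eq hcinj huinj (hUim.trans hUdef)
      refine ⟨(t, σ₁, σ₂), ?_, ?_⟩
      · simp only [Finset.mem_filter, Finset.mem_product]
        refine ⟨⟨ht, mem_univ _⟩, ?_, ?_⟩
        · rw [← Function.comp_assoc]; exact hσ₁
        · rw [← Function.comp_assoc]; exact hσ₂
      · simp only [Prod.mk.injEq]
        exact ⟨tb₁, tb₂, tb₃⟩
  rw [key]
  have cO : (S ∩ U).card = k₂ - j := hovl
  have cUS : (U \ S).card = j := by
    have := Finset.card_sdiff_add_card_inter U S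
    rw [Finset.inter_comm] at this
    omega
  have cSU : (S \ U).card = k₁ - k₂ + j := by
    have := Finset.card_sdiff_add_card_inter S U
    omega
  rw [Finset.card_product, Finset.card_product]
  rw [card_distinctTuples, card_distinctTuples, card_distinctTuples, cO, cUS, cSU,
    Nat.descFactorial_self, Nat.descFactorial_self, Nat.descFactorial_self]

lemma sum_filter_overlap (k₁ k₂ j : ℕ) (hk : k₂ ≤ k₁) (hj : j ≤ k₂) (hc : k₂ ≤ k₁ + j)
    (f₁ : (Fin k₁ → B) → ℝ)
    (hf₁ : ∀ (σ : Equiv.Perm (Fin k₁)) (t : Fin k₁ → B), f₁ (t ∘ σ) = f₁ t)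
    (f₂ : (Fin k₂ → B) → ℝ)
    (hf₂ : ∀ (σ : Equiv.Perm (Fin k₂)) (t : Fin k₂ → B), f₂ (t ∘ σ) = f₂ t)
    (μ : Finset B) :
    ∑ p ∈ (distinctTuples k₁ μ ×ˢ distinctTuples k₂ μ).filter
        (fun p => (Finset.image p.1 univ ∩ Finset.image p.2 univ).card = k₂ - j),
      f₁ p.1 * f₂ p.2
    = (k₂.choose j : ℝ) * ((k₁.factorial : ℝ) / (k₁ - k₂ + j).factorial) *
      ∑ t ∈ distinctTuples (k₁ + j) μ, f₂ (t ∘ Fin.castLE hc) * f₁ (t ∘ iota k₁ k₂ j) := by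
  classical
  set P := (distinctTuples k₁ μ ×ˢ distinctTuples k₂ μ).filter
      (fun p => (Finset.image p.1 univ ∩ Finset.image p.2 univ).card = k₂ - j) with hP
  set Dom := (distinctTuples (k₁ + j) μ) ×ˢ
      (univ : Finset (Equiv.Perm (Fin k₁) × Equiv.Perm (Fin k₂))) with hDom
  set Φ : ((Fin (k₁ + j) → B) × (Equiv.Perm (Fin k₁) × Equiv.Perm (Fin k₂)))
      → (Fin k₁ → B) × (Fin k₂ → B) :=
    fun x => (x.1 ∘ iota k₁ k₂ j ∘ x.2.1, x.1 ∘ Fin.castLE hc ∘ x.2.2) with hΦ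
  have hiotainj : Function.Injective (iota k₁ k₂ j) := by
    intro a b hab
    unfold iota at hab
    split_ifs at hab <;> rw [Fin.mk.injEq] at hab <;> exact Fin.ext (by omega)
  have hmaps : ∀ x ∈ Dom, Φ x ∈ P := by
    rintro ⟨t, σ₁, σ₂⟩ hx
    rw [hDom, Finset.mem_product] at hx
    obtain ⟨htμ, htinj⟩ := mem_distinctTuples.mp hx.1
    rw [hP, Finset.mem_filter, Finset.mem_product]
    refine ⟨⟨?_, ?_⟩, ?_⟩
    · exact mem_distinctTuples.mpr ⟨fun i => htμ _,
        htinj.comp (hiotainj.comp σ₁.injective)⟩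
    · exact mem_distinctTuples.mpr ⟨fun i => htμ _,
        htinj.comp ((Fin.castLE_injective hc).comp σ₂.injective)⟩
    · show (Finset.image (t ∘ iota k₁ k₂ j ∘ σ₁) univ
        ∩ Finset.image (t ∘ Fin.castLE hc ∘ σ₂) univ).card = k₂ - j
      rw [← Function.comp_assoc, comp_perm_image, ← Function.comp_assoc, comp_perm_image,
        ← Finset.image_image, ← Finset.image_image (g := t), ← Finset.image_inter _ _ htinj,
        image_iota_inter k₁ k₂ j hk hj hc (by omega), Finset.image_image,
        Finset.card_image_of_injective _ (htinj.comp (Fin.castLE_injective _)),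
        card_univ, Fintype.card_fin]
  have E : ((k₁.factorial * k₂.factorial : ℕ) : ℝ) *
      ∑ t ∈ distinctTuples (k₁ + j) μ, f₂ (t ∘ Fin.castLE hc) * f₁ (t ∘ iota k₁ k₂ j)
      = ∑ x ∈ Dom, f₂ (x.1 ∘ Fin.castLE hc) * f₁ (x.1 ∘ iota k₁ k₂ j) := by
    rw [hDom, Finset.sum_product]
    simp only [Finset.sum_const, card_univ, Fintype.card_prod, Fintype.card_perm,
      Fintype.card_fin, nsmul_eq_mul]
    rw [Finset.mul_sum]
  have E2 : ∑ x ∈ Dom, f₂ (x.1 ∘ Fin.castLE hc) * f₁ (x.1 ∘ iota k₁ k₂ j)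
      = ∑ p ∈ P, ∑ x ∈ Dom.filter (fun x => Φ x = p),
          f₂ (x.1 ∘ Fin.castLE hc) * f₁ (x.1 ∘ iota k₁ k₂ j) :=
    (Finset.sum_fiberwise_of_maps_to hmaps _).symm
  have E3 : ∀ p ∈ P, ∑ x ∈ Dom.filter (fun x => Φ x = p),
      f₂ (x.1 ∘ Fin.castLE hc) * f₁ (x.1 ∘ iota k₁ k₂ j)
      = ((k₂ - j).factorial * (j.factorial * (k₁ - k₂ + j).factorial) : ℕ) *
        (f₁ p.1 * f₂ p.2) := by
    rintro ⟨s, u⟩ hp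
    rw [hP, Finset.mem_filter, Finset.mem_product] at hp
    obtain ⟨⟨hs, hu⟩, hovl⟩ := hp
    have hconst : ∀ x ∈ Dom.filter (fun x => Φ x = (s, u)),
        f₂ (x.1 ∘ Fin.castLE hc) * f₁ (x.1 ∘ iota k₁ k₂ j) = f₁ s * f₂ u := by
      rintro ⟨t, σ₁, σ₂⟩ hx
      rw [Finset.mem_filter] at hx
      have h1 : t ∘ iota k₁ k₂ j ∘ σ₁ = s := congrArg Prod.fst hx.2
      have h2 : t ∘ Fin.castLE hc ∘ σ₂ = u := congrArg Prod.snd hx.2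
      rw [← h1, ← h2, ← Function.comp_assoc, ← Function.comp_assoc, hf₁, hf₂]
      ring
    rw [Finset.sum_congr rfl hconst, Finset.sum_const, nsmul_eq_mul]
    have hfil : Dom.filter (fun x => Φ x = (s, u))
        = Dom.filter (fun x => x.1 ∘ iota k₁ k₂ j ∘ x.2.1 = s ∧
            x.1 ∘ Fin.castLE hc ∘ x.2.2 = u) := by
      apply Finset.filter_congr
      intro x _
      rw [hΦ, Prod.mk.injEq]
    rw [hfil, hDom, fiber_card k₁ k₂ j hk hj hc μ s u hs hu hovl]
  rw [Finset.sum_congr rfl E3] at E2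
  rw [E2] at E
  rw [← Finset.mul_sum] at E
  push_cast at E
  have p1 : (0:ℝ) < (k₂ - j).factorial := by exact_mod_cast Nat.factorial_pos _
  have p2 : (0:ℝ) < (j.factorial : ℝ) := by exact_mod_cast Nat.factorial_pos _
  have p3 : (0:ℝ) < ((k₁ - k₂ + j).factorial : ℝ) := by exact_mod_cast Nat.factorial_pos _
  have hchoose : ((k₂.choose j : ℕ) : ℝ) * j.factorial * (k₂ - j).factorial = k₂.factorial := by
    exact_mod_cast congrArg Nat.cast (Nat.choose_mul_factorial_mul_factorial hj)
  have hcoef : (k₂.choose j : ℝ) * ((k₁.factorial : ℝ) / (k₁ - k₂ + j).factorial)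
      = ((k₁.factorial : ℝ) * k₂.factorial) /
        ((k₂ - j).factorial * (j.factorial * (k₁ - k₂ + j).factorial)) := by
    field_simp
    linear_combination hchoose
  rw [hcoef, div_mul_eq_mul_div, eq_div_iff (by positivity)]
  linear_combination -E

end UstatAux

/-- Product formula for two `U`-statistics of orders `k₁ ≥ k₂`:
`F₁(μ)F₂(μ) = ∑_{j=0}^{k₂} C(k₂,j)·k₁!/(k₁−k₂+j)! ·
  ∑_{(x₁,…,x_{k₁+j}) ∈ μ^{k₁+j}_≠} f₂(x₁,…,x_{k₂}) f₁(x₁,…,x_{k₂−j},x_{k₂+1},…,x_{k₁+j})`. -/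
theorem Ustat_mul_Ustat {B : Type*} [DecidableEq B] (k₁ k₂ : ℕ) (hk : k₂ ≤ k₁)
    (f₁ : (Fin k₁ → B) → ℝ)
    (hf₁ : ∀ (σ : Equiv.Perm (Fin k₁)) (t : Fin k₁ → B), f₁ (t ∘ σ) = f₁ t)
    (f₂ : (Fin k₂ → B) → ℝ)
    (hf₂ : ∀ (σ : Equiv.Perm (Fin k₂)) (t : Fin k₂ → B), f₂ (t ∘ σ) = f₂ t)
    (μ : Finset B) :
    Ustat k₁ f₁ μ * Ustat k₂ f₂ μ =
      ∑ j ∈ Finset.range (k₂ + 1),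
        (k₂.choose j : ℝ) * ((k₁.factorial : ℝ) / (k₁ - k₂ + j).factorial) *
          ∑ t ∈ distinctTuples (k₁ + j) μ,
            f₂ (fun i => t (Fin.castLE (by omega) i)) *
              f₁ (fun i => t ⟨if (i : ℕ) < k₂ - j then (i : ℕ) else (i : ℕ) + j,
                by have := i.isLt; split_ifs <;> omega⟩) := by
  classical
  have step1 : Ustat k₁ f₁ μ * Ustat k₂ f₂ μ
      = ∑ p ∈ distinctTuples k₁ μ ×ˢ distinctTuples k₂ μ, f₁ p.1 * f₂ p.2 := by
    rw [Ustat, Ustat, Finset.sum_mul_sum, ← Finset.sum_product']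
  have hmapsto : ∀ p ∈ distinctTuples k₁ μ ×ˢ distinctTuples k₂ μ,
      k₂ - (Finset.image p.1 Finset.univ ∩ Finset.image p.2 Finset.univ).card
        ∈ Finset.range (k₂ + 1) := fun p _ => Finset.mem_range.mpr (by omega)
  have step2 : ∑ p ∈ distinctTuples k₁ μ ×ˢ distinctTuples k₂ μ, f₁ p.1 * f₂ p.2
      = ∑ j ∈ Finset.range (k₂ + 1),
          ∑ p ∈ (distinctTuples k₁ μ ×ˢ distinctTuples k₂ μ).filter
            (fun p => k₂ - (Finset.image p.1 Finset.univ
              ∩ Finset.image p.2 Finset.univ).card = j),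
            f₁ p.1 * f₂ p.2 :=
    (Finset.sum_fiberwise_of_maps_to hmapsto _).symm
  rw [step1, step2]
  refine Finset.sum_congr rfl fun j hjr => ?_
  have hj : j ≤ k₂ := by
    have := Finset.mem_range.mp hjr; omega
  have hc : k₂ ≤ k₁ + j := by omega
  have hfil : (distinctTuples k₁ μ ×ˢ distinctTuples k₂ μ).filter
        (fun p => k₂ - (Finset.image p.1 Finset.univ
          ∩ Finset.image p.2 Finset.univ).card = j)
      = (distinctTuples k₁ μ ×ˢ distinctTuples k₂ μ).filter
        (fun p => (Finset.image p.1 Finset.univ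
          ∩ Finset.image p.2 Finset.univ).card = k₂ - j) := by
    apply Finset.filter_congr
    intro p hp
    rw [Finset.mem_product] at hp
    have hpu := (UstatAux.mem_distinctTuples.mp hp.2).2
    have hcard : (Finset.image p.1 Finset.univ ∩ Finset.image p.2 Finset.univ).card ≤ k₂ := by
      calc (Finset.image p.1 Finset.univ ∩ Finset.image p.2 Finset.univ).card
          ≤ (Finset.image p.2 Finset.univ).card :=
            Finset.card_le_card Finset.inter_subset_right
        _ = k₂ := by
            rw [Finset.card_image_of_injective _ hpu, Finset.card_univ, Fintype.card_fin]
    constructor <;> intro h <;> omega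
  rw [hfil, UstatAux.sum_filter_overlap k₁ k₂ j hk hj hc f₁ hf₁ f₂ hf₂ μ]
  congr 1
  refine Finset.sum_congr rfl fun t _ => ?_
  congr 1
  congr 1
  funext i
  show t (UstatAux.iota k₁ k₂ j i) = _
  congr 1
  apply Fin.ext
  show ((UstatAux.iota k₁ k₂ j) i : ℕ) = _
  unfold UstatAux.iota
  split_ifs <;> simp
end
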